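/- Let ρ, ρ̄ : ℝ^d → ℝ be nonnegative integrable functions, both strictly positive almost everywhere. Then (∫ |ρ - ρ̄| dx)² ≤ (∫ (ρ + ρ̄) dx) · (∫ min(1/ρ̄, 1/ρ)·(ρ - ρ̄)² dx). -/

import Mathlib

open MeasureTheory

/-- For nonnegative integrable `ρ, ρb : ℝ^d → ℝ`, both strictly positive a.e.,
`(∫ |ρ - ρb|)² ≤ (∫ (ρ + ρb)) · (∫ min(1/ρb, 1/ρ)·(ρ - ρb)²)`. -/
theorem L1_diff_sq_le (d : ℕ) (ρ ρb : EuclideanSpace ℝ (Fin d) → ℝ)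
    (hρ0 : ∀ x, 0 ≤ ρ x) (hρb0 : ∀ x, 0 ≤ ρb x)
    (hρi : Integrable ρ) (hρbi : Integrable ρb)
    (hρpos : ∀ᵐ x, 0 < ρ x) (hρbpos : ∀ᵐ x, 0 < ρb x)
    (hmin : Integrable (fun x => min (ρb x)⁻¹ (ρ x)⁻¹ * (ρ x - ρb x) ^ 2)) :
    (∫ x, |ρ x - ρb x|) ^ 2
      ≤ (∫ x, (ρ x + ρb x)) * ∫ x, min (ρb x)⁻¹ (ρ x)⁻¹ * (ρ x - ρb x) ^ 2 := by
  set f : EuclideanSpace ℝ (Fin d) → ℝ := fun x => Real.sqrt (ρ x + ρb x) with hf_def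
  set g : EuclideanSpace ℝ (Fin d) → ℝ :=
    fun x => Real.sqrt (min (ρb x)⁻¹ (ρ x)⁻¹) * |ρ x - ρb x| with hg_def
  have hadd : ∀ x, 0 ≤ ρ x + ρb x := fun x => add_nonneg (hρ0 x) (hρb0 x)
  have hminpt : ∀ x, 0 ≤ min (ρb x)⁻¹ (ρ x)⁻¹ := fun x =>
    le_min (inv_nonneg.mpr (hρb0 x)) (inv_nonneg.mpr (hρ0 x))
  have hfsq : ∀ x, f x ^ 2 = ρ x + ρb x := fun x => Real.sq_sqrt (hadd x)
  have hgsq : ∀ x, g x ^ 2 = min (ρb x)⁻¹ (ρ x)⁻¹ * (ρ x - ρb x) ^ 2 := by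
    intro x
    rw [hg_def, mul_pow, Real.sq_sqrt (hminpt x), sq_abs]
  have hfm : AEStronglyMeasurable f (volume : Measure (EuclideanSpace ℝ (Fin d))) :=
    Real.continuous_sqrt.comp_aestronglyMeasurable
      (hρi.aestronglyMeasurable.add hρbi.aestronglyMeasurable)
  have hsubm : AEStronglyMeasurable (fun x => ρ x - ρb x)
      (volume : Measure (EuclideanSpace ℝ (Fin d))) :=
    hρi.aestronglyMeasurable.sub hρbi.aestronglyMeasurable
  have hminm : AEStronglyMeasurable (fun x => min (ρb x)⁻¹ (ρ x)⁻¹)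
      (volume : Measure (EuclideanSpace ℝ (Fin d))) :=
    (hρbi.aestronglyMeasurable.aemeasurable.inv.min
      hρi.aestronglyMeasurable.aemeasurable.inv).aestronglyMeasurable
  have hgm : AEStronglyMeasurable g (volume : Measure (EuclideanSpace ℝ (Fin d))) :=
    (Real.continuous_sqrt.comp_aestronglyMeasurable hminm).mul (continuous_abs.comp_aestronglyMeasurable hsubm)
  have hfL2 : MemLp f 2 volume := by
    rw [memLp_two_iff_integrable_sq hfm]
    refine (hρi.add hρbi).congr ?_
    exact Filter.Eventually.of_forall fun x => (hfsq x).symm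
  have hgL2 : MemLp g 2 volume := by
    rw [memLp_two_iff_integrable_sq hgm]
    refine hmin.congr ?_
    exact Filter.Eventually.of_forall fun x => (hgsq x).symm
  -- pointwise a.e. : |ρ - ρb| ≤ f * g
  have hpt : ∀ᵐ x, |ρ x - ρb x| ≤ f x * g x := by
    filter_upwards [hρpos, hρbpos] with x hx hbx
    have hone : (1 : ℝ) ≤ (ρ x + ρb x) * min (ρb x)⁻¹ (ρ x)⁻¹ := by
      rcases le_total (ρ x) (ρb x) with h | h
      · rw [min_eq_left (by gcongr)]
        calc (1 : ℝ) = ρb x * (ρb x)⁻¹ := (mul_inv_cancel₀ (ne_of_gt hbx)).symm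
          _ ≤ (ρ x + ρb x) * (ρb x)⁻¹ := by
              gcongr
              exact le_add_of_nonneg_left (hρ0 x)
      · rw [min_eq_right (by gcongr)]
        calc (1 : ℝ) = ρ x * (ρ x)⁻¹ := (mul_inv_cancel₀ (ne_of_gt hx)).symm
          _ ≤ (ρ x + ρb x) * (ρ x)⁻¹ := by
              gcongr
              exact le_add_of_nonneg_right (hρb0 x)
    have : f x * g x = Real.sqrt ((ρ x + ρb x) * min (ρb x)⁻¹ (ρ x)⁻¹) * |ρ x - ρb x| := by
      rw [hf_def, hg_def, Real.sqrt_mul (hadd x)]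
      ring
    rw [this]
    nth_rewrite 1 [← one_mul |ρ x - ρb x|]
    gcongr
    calc (1 : ℝ) = Real.sqrt 1 := Real.sqrt_one.symm
      _ ≤ _ := Real.sqrt_le_sqrt hone
  have hfg_int : Integrable (fun x => f x * g x) volume := by
    have hb : Integrable (fun x => (f x ^ 2 + g x ^ 2) / 2) volume :=
      (hfL2.integrable_sq.add hgL2.integrable_sq).div_const 2
    refine hb.mono' (hfm.mul hgm) ?_
    refine Filter.Eventually.of_forall fun x => ?_
    have h1 : 0 ≤ f x := Real.sqrt_nonneg _
    have h2 : 0 ≤ g x := mul_nonneg (Real.sqrt_nonneg _) (abs_nonneg _)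
    rw [Real.norm_of_nonneg (mul_nonneg h1 h2)]
    nlinarith [sq_nonneg (f x - g x)]
  have habs_int : Integrable (fun x => |ρ x - ρb x|) volume := (hρi.sub hρbi).abs
  have step1 : ∫ x, |ρ x - ρb x| ≤ ∫ x, f x * g x :=
    integral_mono_ae habs_int hfg_int hpt
  have hconj : (2 : ℝ).HolderConjugate 2 := by
    rw [Real.holderConjugate_iff]
    constructor <;> norm_num
  have step2 : ∫ x, f x * g x ≤
      (∫ x, f x ^ (2:ℝ)) ^ ((1:ℝ)/2) * (∫ x, g x ^ (2:ℝ)) ^ ((1:ℝ)/2) := by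
    have hf2 : MemLp f (ENNReal.ofReal 2) volume := by
      convert hfL2 using 2
      norm_num
    have hg2 : MemLp g (ENNReal.ofReal 2) volume := by
      convert hgL2 using 2
      norm_num
    exact integral_mul_le_Lp_mul_Lq_of_nonneg hconj
      (Filter.Eventually.of_forall fun x => Real.sqrt_nonneg _)
      (Filter.Eventually.of_forall fun x =>
        mul_nonneg (Real.sqrt_nonneg _) (abs_nonneg _)) hf2 hg2
  have hF : ∫ x, f x ^ (2:ℝ) = ∫ x, (ρ x + ρb x) := by
    refine integral_congr_ae (Filter.Eventually.of_forall fun x => ?_)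
    simp only [Real.rpow_two]
    exact hfsq x
  have hG : ∫ x, g x ^ (2:ℝ) = ∫ x, min (ρb x)⁻¹ (ρ x)⁻¹ * (ρ x - ρb x) ^ 2 := by
    refine integral_congr_ae (Filter.Eventually.of_forall fun x => ?_)
    simp only [Real.rpow_two]
    exact hgsq x
  have hFnn : 0 ≤ ∫ x, (ρ x + ρb x) :=
    integral_nonneg fun x => hadd x
  have hGnn : 0 ≤ ∫ x, min (ρb x)⁻¹ (ρ x)⁻¹ * (ρ x - ρb x) ^ 2 :=
    integral_nonneg fun x => mul_nonneg (hminpt x) (sq_nonneg _)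
  have habsnn : 0 ≤ ∫ x, |ρ x - ρb x| := integral_nonneg fun x => abs_nonneg _
  have step : ∫ x, |ρ x - ρb x| ≤
      (∫ x, (ρ x + ρb x)) ^ ((1:ℝ)/2) *
        (∫ x, min (ρb x)⁻¹ (ρ x)⁻¹ * (ρ x - ρb x) ^ 2) ^ ((1:ℝ)/2) := by
    calc ∫ x, |ρ x - ρb x| ≤ ∫ x, f x * g x := step1
      _ ≤ _ := by rw [← hF, ← hG]; exact step2
  calc (∫ x, |ρ x - ρb x|) ^ 2
      ≤ ((∫ x, (ρ x + ρb x)) ^ ((1:ℝ)/2) *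
          (∫ x, min (ρb x)⁻¹ (ρ x)⁻¹ * (ρ x - ρb x) ^ 2) ^ ((1:ℝ)/2)) ^ 2 := by
        gcongr
    _ = (∫ x, (ρ x + ρb x)) * ∫ x, min (ρb x)⁻¹ (ρ x)⁻¹ * (ρ x - ρb x) ^ 2 := by
        rw [mul_pow, ← Real.rpow_natCast ((∫ x, (ρ x + ρb x)) ^ ((1:ℝ)/2)) 2,
          ← Real.rpow_natCast ((∫ x, min (ρb x)⁻¹ (ρ x)⁻¹ * (ρ x - ρb x) ^ 2) ^ ((1:ℝ)/2)) 2,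
          ← Real.rpow_mul hFnn, ← Real.rpow_mul hGnn]
        norm_num
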